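/- For every n ≥ 1, ann_R(Ext_R^{n−1}(M₁, N)) · ann_R(Ext_R^n(M₂, N)) ⊆ ann_R(Ext_R^n(M₃, N)); in particular, if r ∈ R annihilates Ext_R^{n−1}(M₁, N) and s ∈ R annihilates Ext_R^n(M₂, N), then r·s annihilates Ext_R^n(M₃, N). -/

import Mathlib

open CategoryTheory

/-- The `R`-module `Ext_R^n(M, N)`, computed in the category of `R`-modules. -/
noncomputable abbrev extModule (R : Type u) [CommRing R] (M N : Type u)
    [AddCommGroup M] [Module R M] [AddCommGroup N] [Module R N] (n : ℕ) :
    ModuleCat.{u} R :=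
  ((Ext R (ModuleCat.{u} R) n).obj (Opposite.op (ModuleCat.of R M))).obj (ModuleCat.of R N)


open CategoryTheory

universe u

/-- Data of a short exact sequence of modules. -/
structure SESData (R : Type u) [CommRing R] where
  A₁ : Type u
  A₂ : Type u
  A₃ : Type u
  [acg₁ : AddCommGroup A₁]
  [acg₂ : AddCommGroup A₂]
  [acg₃ : AddCommGroup A₃]
  [mod₁ : Module R A₁]
  [mod₂ : Module R A₂]
  [mod₃ : Module R A₃]
  i : A₁ →ₗ[R] A₂
  p : A₂ →ₗ[R] A₃
  hi : Function.Injective i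
  hp : Function.Surjective p
  hx : ∀ y, p y = 0 ↔ y ∈ LinearMap.range i

attribute [instance] SESData.acg₁ SESData.acg₂ SESData.acg₃
attribute [instance] SESData.mod₁ SESData.mod₂ SESData.mod₃

namespace SESData

variable {R : Type u} [CommRing R] (S : SESData R)

noncomputable def q1 : (S.A₁ →₀ R) →ₗ[R] S.A₁ := Finsupp.linearCombination R _root_.id
noncomputable def q3 : (S.A₃ →₀ R) →ₗ[R] S.A₃ := Finsupp.linearCombination R _root_.id

lemma q1_surj : Function.Surjective S.q1 :=
  fun a => ⟨Finsupp.single a 1, by simp [q1]⟩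

lemma q3_surj : Function.Surjective S.q3 :=
  fun a => ⟨Finsupp.single a 1, by simp [q3]⟩

noncomputable def sec : S.A₃ → S.A₂ := fun a => (S.hp a).choose

lemma p_sec (a : S.A₃) : S.p (S.sec a) = a := (S.hp a).choose_spec

noncomputable def t : (S.A₃ →₀ R) →ₗ[R] S.A₂ := Finsupp.linearCombination R S.sec

lemma p_t (y : S.A₃ →₀ R) : S.p (S.t y) = S.q3 y := by
  have : S.p ∘ₗ S.t = S.q3 := by
    apply Finsupp.lhom_ext
    intro a b
    simp [t, q3, p_sec]
  exact DFunLike.congr_fun this y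

noncomputable def q2 : ((S.A₁ →₀ R) × (S.A₃ →₀ R)) →ₗ[R] S.A₂ :=
  S.i ∘ₗ S.q1 ∘ₗ LinearMap.fst R _ _ + S.t ∘ₗ LinearMap.snd R _ _

lemma q2_apply (z : (S.A₁ →₀ R) × (S.A₃ →₀ R)) : S.q2 z = S.i (S.q1 z.1) + S.t z.2 := rfl

lemma p_i (a : S.A₁) : S.p (S.i a) = 0 := (S.hx (S.i a)).2 ⟨a, rfl⟩

lemma p_q2 (z : (S.A₁ →₀ R) × (S.A₃ →₀ R)) : S.p (S.q2 z) = S.q3 z.2 := by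
  simp [q2_apply, p_i, p_t]

lemma q2_inl (x : S.A₁ →₀ R) : S.q2 (x, 0) = S.i (S.q1 x) := by
  simp [q2_apply]

lemma q2_surj : Function.Surjective S.q2 := by
  intro a₂
  obtain ⟨y, hy⟩ := S.q3_surj (S.p a₂)
  have h0 : S.p (a₂ - S.t y) = 0 := by
    simp [map_sub, p_t, hy]
  obtain ⟨a₁, ha₁⟩ := (S.hx _).1 h0
  obtain ⟨x, hx⟩ := S.q1_surj a₁
  exact ⟨(x, y), by simp [q2_apply, hx, ha₁]⟩

/-- The kernel short exact sequence, together with free covers. -/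
noncomputable def next : SESData R where
  A₁ := LinearMap.ker S.q1
  A₂ := LinearMap.ker S.q2
  A₃ := LinearMap.ker S.q3
  i := LinearMap.codRestrict _ ((LinearMap.inl R _ _) ∘ₗ (LinearMap.ker S.q1).subtype)
    (fun c => by
      simp only [LinearMap.mem_ker, LinearMap.comp_apply, Submodule.subtype_apply,
        LinearMap.inl_apply]
      rw [q2_inl]
      simp [c.2])
  p := LinearMap.codRestrict _ ((LinearMap.snd R _ _) ∘ₗ (LinearMap.ker S.q2).subtype)
    (fun c => by
      have : S.p (S.q2 c.1) = S.q3 c.1.2 := S.p_q2 c.1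
      have hc : S.q2 c.1 = 0 := c.2
      simp only [LinearMap.mem_ker, LinearMap.comp_apply, Submodule.subtype_apply,
        LinearMap.snd_apply]
      rw [← this, hc, map_zero])
  hi := by
    intro a b h
    apply Subtype.ext
    exact congrArg Prod.fst (congrArg Subtype.val h)
  hp := by
    rintro ⟨y, hy⟩
    have hy' : S.q3 y = 0 := hy
    have h0 : S.p (S.t y) = 0 := by rw [p_t, hy']
    obtain ⟨a₁, ha₁⟩ := (S.hx _).1 h0
    obtain ⟨x, hx⟩ := S.q1_surj a₁
    have hz : S.q2 (-x, y) = 0 := by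
      simp [q2_apply, hx, ha₁]
    exact ⟨⟨(-x, y), hz⟩, rfl⟩
  hx := by
    rintro ⟨⟨x, y⟩, hc⟩
    constructor
    · intro h
      have hy : y = 0 := congrArg Subtype.val h
      subst hy
      have hq2 : S.q2 (x, 0) = 0 := hc
      rw [q2_inl] at hq2
      have hx0 : S.q1 x = 0 := S.hi (by simpa using hq2)
      exact ⟨⟨x, hx0⟩, by apply Subtype.ext; rfl⟩
    · rintro ⟨a, ha⟩
      apply Subtype.ext
      show y = 0
      exact (congrArg Prod.snd (congrArg Subtype.val ha)).symm

noncomputable def tower (S : SESData R) : ℕ → SESData R :=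
  fun n => Nat.rec S (fun _ T => T.next) n

end SESData
section ResData
open CategoryTheory

variable {R : Type u} [CommRing R]

/-- Data for a concrete projective resolution of an `R`-module `M`. -/
structure ResData (R : Type u) [CommRing R] (M : Type u) [AddCommGroup M] [Module R M] where
  G : ℕ → Type u
  [acg : ∀ n, AddCommGroup (G n)]
  [mod : ∀ n, Module R (G n)]
  proj : ∀ n, Projective (ModuleCat.of R (G n))
  q0 : G 0 →ₗ[R] M
  hq0 : Function.Surjective q0
  d : ∀ n, G (n + 1) →ₗ[R] G n
  hd0 : LinearMap.range (d 0) = LinearMap.ker q0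
  hd : ∀ n, LinearMap.range (d (n + 1)) = LinearMap.ker (d n)

attribute [instance] ResData.acg ResData.mod

namespace ResData

variable {M : Type u} [AddCommGroup M] [Module R M] (D : ResData R M)

noncomputable def complex : ChainComplex (ModuleCat.{u} R) ℕ :=
  ChainComplex.of (fun n => ModuleCat.of R (D.G n)) (fun n => ModuleCat.ofHom (D.d n))
    (fun n => by
      apply ModuleCat.hom_ext
      apply LinearMap.ext
      intro x
      have : D.d (n + 1) x ∈ LinearMap.ker (D.d n) := by
        rw [← D.hd n]; exact ⟨x, rfl⟩
      exact this)

lemma complex_X (n : ℕ) : D.complex.X n = ModuleCat.of R (D.G n) := rfl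

lemma complex_d (n : ℕ) : D.complex.d (n + 1) n = ModuleCat.ofHom (D.d n) :=
  ChainComplex.of_d (fun n => ModuleCat.of R (D.G n)) (fun n => ModuleCat.ofHom (D.d n)) n

noncomputable def resolution : ProjectiveResolution (ModuleCat.of R M) where
  complex := D.complex
  projective n := D.proj n
  π := (ChainComplex.toSingle₀Equiv _ _).symm ⟨ModuleCat.ofHom D.q0, by
    rw [D.complex_d 0]
    apply ModuleCat.hom_ext
    apply LinearMap.ext
    intro x
    have : D.d 0 x ∈ LinearMap.ker D.q0 := by rw [← D.hd0]; exact ⟨x, rfl⟩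
    exact this⟩
  quasiIso := ⟨fun n => by
    cases n with
    | zero =>
      rw [ChainComplex.quasiIsoAt₀_iff, ShortComplex.quasiIso_iff_of_zeros']
      · constructor
        · rw [ShortComplex.moduleCat_exact_iff]
          intro (x : D.G 0) hx
          have hx' : D.q0 x = 0 := by
            exact hx
          obtain ⟨y, hy⟩ : x ∈ LinearMap.range (D.d 0) := by rw [D.hd0]; exact hx'
          refine ⟨y, ?_⟩
          show ((D.complex.sc' 1 0 0).f) y = x
          have : (D.complex.sc' 1 0 0).f = D.complex.d 1 0 := rfl
          rw [this, D.complex_d 0]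
          exact hy
        · rw [ModuleCat.epi_iff_surjective]
          intro x
          obtain ⟨y, hy⟩ := D.hq0 x
          refine ⟨y, ?_⟩
          exact hy
      all_goals rfl
    | succ n =>
      rw [quasiIsoAt_iff_exactAt']
      · rw [HomologicalComplex.exactAt_iff' _ (n + 2) (n + 1) n (by simp) (by simp)]
        rw [ShortComplex.moduleCat_exact_iff]
        intro (x : D.G (n + 1)) hx
        have hx' : D.d n x = 0 := by
          have : (D.complex.sc' (n + 2) (n + 1) n).g = D.complex.d (n + 1) n := rfl
          rw [this, D.complex_d n] at hx
          exact hx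
        obtain ⟨y, hy⟩ : x ∈ LinearMap.range (D.d (n + 1)) := by rw [D.hd n]; exact hx'
        refine ⟨y, ?_⟩
        show ((D.complex.sc' (n + 2) (n + 1) n).f) y = x
        have : (D.complex.sc' (n + 2) (n + 1) n).f = D.complex.d (n + 2) (n + 1) := rfl
        rw [this, D.complex_d (n + 1)]
        exact hy
      · apply ChainComplex.exactAt_succ_single_obj⟩

end ResData
end ResData
section Tower
open CategoryTheory

variable {R : Type u} [CommRing R]

lemma range_subtype_comp {F K0 : Type u} [AddCommGroup F] [Module R F]
    [AddCommGroup K0] [Module R K0] (K : Submodule R K0) (q : F →ₗ[R] K)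
    (hq : Function.Surjective q) :
    LinearMap.range (K.subtype ∘ₗ q) = K := by
  rw [LinearMap.range_comp, LinearMap.range_eq_top.2 hq, Submodule.map_top,
    Submodule.range_subtype]

lemma ker_subtype_comp {F K0 : Type u} [AddCommGroup F] [Module R F]
    [AddCommGroup K0] [Module R K0] (K : Submodule R K0) (q : F →ₗ[R] K) :
    LinearMap.ker (K.subtype ∘ₗ q) = LinearMap.ker q := by
  rw [LinearMap.ker_comp, Submodule.ker_subtype]
  rfl

namespace SESData

variable (S : SESData R)

noncomputable def res1 : ResData R S.A₁ where
  G n := (tower S n).A₁ →₀ R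
  proj n := ModuleCat.projective_of_free Finsupp.basisSingleOne
  q0 := (tower S 0).q1
  hq0 := (tower S 0).q1_surj
  d n := (LinearMap.ker (tower S n).q1).subtype ∘ₗ (tower S (n + 1)).q1
  hd0 := range_subtype_comp _ _ (tower S 1).q1_surj
  hd n := (range_subtype_comp _ _ (tower S (n + 2)).q1_surj).trans
    (ker_subtype_comp _ _).symm

noncomputable def res2 : ResData R S.A₂ where
  G n := ((tower S n).A₁ →₀ R) × ((tower S n).A₃ →₀ R)
  proj n := ModuleCat.projective_of_free
    (Module.Basis.prod Finsupp.basisSingleOne Finsupp.basisSingleOne)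
  q0 := (tower S 0).q2
  hq0 := (tower S 0).q2_surj
  d n := (LinearMap.ker (tower S n).q2).subtype ∘ₗ (tower S (n + 1)).q2
  hd0 := range_subtype_comp _ _ (tower S 1).q2_surj
  hd n := (range_subtype_comp _ _ (tower S (n + 2)).q2_surj).trans
    (ker_subtype_comp _ _).symm

noncomputable def res3 : ResData R S.A₃ where
  G n := (tower S n).A₃ →₀ R
  proj n := ModuleCat.projective_of_free Finsupp.basisSingleOne
  q0 := (tower S 0).q3
  hq0 := (tower S 0).q3_surj
  d n := (LinearMap.ker (tower S n).q3).subtype ∘ₗ (tower S (n + 1)).q3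
  hd0 := range_subtype_comp _ _ (tower S 1).q3_surj
  hd n := (range_subtype_comp _ _ (tower S (n + 2)).q3_surj).trans
    (ker_subtype_comp _ _).symm

/-- The inclusion chain map `C₁ ⟶ C₂`. -/
noncomputable def ιc : (res1 S).complex ⟶ (res2 S).complex :=
  HomologicalComplex.Hom.mk (fun n => ModuleCat.ofHom (LinearMap.inl R _ _))
    (by
      rintro i j (hij : j + 1 = i)
      subst hij
      rw [(res1 S).complex_d j, (res2 S).complex_d j]
      apply ModuleCat.hom_ext
      apply LinearMap.ext
      intro x
      show ((res2 S).d j) (LinearMap.inl R _ _ x) = LinearMap.inl R _ _ (((res1 S).d j) x)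
      show ((LinearMap.ker (tower S j).q2).subtype) ((tower S (j + 1)).q2 (x, 0)) = _
      erw [SESData.q2_inl]
      rfl)

/-- The projection chain map `C₂ ⟶ C₃`. -/
noncomputable def πc : (res2 S).complex ⟶ (res3 S).complex :=
  HomologicalComplex.Hom.mk (fun n => ModuleCat.ofHom (LinearMap.snd R ((tower S n).A₁ →₀ R) ((tower S n).A₃ →₀ R)))
    (by
      rintro i j (hij : j + 1 = i)
      subst hij
      rw [(res2 S).complex_d j, (res3 S).complex_d j]
      apply ModuleCat.hom_ext
      apply LinearMap.ext
      intro z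
      show ((LinearMap.ker (tower S j).q3).subtype) ((tower S (j + 1)).q3 z.2) =
        (((LinearMap.ker (tower S j).q2).subtype) ((tower S (j + 1)).q2 z)).2
      exact (congrArg Subtype.val (SESData.p_q2 _ z)).symm)

lemma ιc_f (n : ℕ) : (ιc S).f n = ModuleCat.ofHom (LinearMap.inl R _ _) := rfl
lemma πc_f (n : ℕ) : (πc S).f n = ModuleCat.ofHom (LinearMap.snd R ((tower S n).A₁ →₀ R) ((tower S n).A₃ →₀ R)) := rfl

end SESData
end Tower
section Final
open CategoryTheory

variable {R : Type u} [CommRing R]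

/-- Precomposition morphism between Hom complexes. -/
noncomputable def homComplexMap {K L : ChainComplex (ModuleCat.{u} R) ℕ} (φ : K ⟶ L)
    (Y : ModuleCat.{u} R) :
    (L.linearYonedaObj R Y) ⟶ (K.linearYonedaObj R Y) :=
  HomologicalComplex.Hom.mk (fun n => ModuleCat.ofHom (Linear.leftComp R Y (φ.f n)))
    (by
      intro i j hij
      apply ModuleCat.hom_ext
      apply LinearMap.ext
      intro ψ
      show (K.linearYonedaObj R Y).d i j (φ.f i ≫ ψ) =
        φ.f j ≫ ((L.linearYonedaObj R Y).d i j ψ)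
      rw [ChainComplex.linearYonedaObj_d, ChainComplex.linearYonedaObj_d]
      show K.d j i ≫ (φ.f i ≫ ψ) = φ.f j ≫ (L.d j i ≫ ψ)
      exact (Category.assoc _ _ _).symm.trans ((congrArg (fun h => h ≫ (ψ : L.X i ⟶ Y)) (φ.comm j i).symm).trans (Category.assoc _ _ _)))

lemma smul_all_zero_of_iso {A B : ModuleCat.{u} R} (e : A ≅ B) (r : R)
    (h : ∀ b : B, r • b = 0) : ∀ a : A, r • a = 0 := fun a =>
  calc r • a = r • e.inv (e.hom a) := (congrArg (r • ·) (e.hom_inv_id_apply a)).symm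
  _ = e.inv (r • e.hom a) := (map_smul e.inv.hom r _).symm
  _ = e.inv 0 := congrArg e.inv.hom (h _)
  _ = 0 := map_zero _

namespace SESData

variable (S : SESData R) (Y : ModuleCat.{u} R)

/-- The short complex of Hom cochain complexes. -/
noncomputable def SC : ShortComplex (CochainComplex (ModuleCat.{u} R) ℕ) :=
  ShortComplex.mk (homComplexMap (πc S) Y) (homComplexMap (ιc S) Y) (by
    ext n ψ
    let ψ' : S.res3.complex.X n ⟶ Y := ψ
    show (ιc S).f n ≫ ((πc S).f n ≫ ψ') = 0
    apply ModuleCat.hom_ext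
    apply LinearMap.ext
    intro x
    show ψ' ((LinearMap.snd R ((tower S n).A₁ →₀ R) ((tower S n).A₃ →₀ R))
      ((LinearMap.inl R _ _) x)) = (0 : S.res1.complex.X n ⟶ Y) x
    rw [show (LinearMap.snd R ((tower S n).A₁ →₀ R) ((tower S n).A₃ →₀ R))
      ((LinearMap.inl R _ _) x) = 0 from rfl]
    erw [map_zero]
    rfl)

lemma SC_shortExact : (SC S Y).ShortExact := by
  apply HomologicalComplex.shortExact_of_degreewise_shortExact
  intro n
  apply ShortComplex.ShortExact.mk'
  · rw [ShortComplex.moduleCat_exact_iff]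
    intro ψ hψ
    let ψ' : (((tower S n).A₁ →₀ R) × ((tower S n).A₃ →₀ R)) →ₗ[R] Y := (ψ : S.res2.complex.X n ⟶ Y).hom
    have hψ2 : (ψ' ∘ₗ LinearMap.inl R ((tower S n).A₁ →₀ R) ((tower S n).A₃ →₀ R)) = 0 := congrArg ModuleCat.Hom.hom hψ
    have hψ' : ∀ x, ψ' ((LinearMap.inl R _ _) x) = 0 := by
      intro x
      have h0 := DFunLike.congr_fun hψ2 x
      simpa using h0
    refine ⟨ModuleCat.ofHom (ψ' ∘ₗ LinearMap.inr R _ _), ?_⟩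
    apply ModuleCat.hom_ext
    apply LinearMap.ext
    rintro ⟨x, y⟩
    show ψ' (0, y) = ψ' (x, y)
    have hx0 : ψ' (x, 0) = 0 := hψ' x
    have : ψ' (x, y) = ψ' (x, 0) + ψ' (0, y) := by
      rw [← map_add]
      congr 1
      simp
    rw [this, hx0, zero_add]
  · rw [ModuleCat.mono_iff_injective]
    intro a b hab
    let a' : ((tower S n).A₃ →₀ R) →ₗ[R] Y := (a : S.res3.complex.X n ⟶ Y).hom
    let b' : ((tower S n).A₃ →₀ R) →ₗ[R] Y := (b : S.res3.complex.X n ⟶ Y).hom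
    apply ModuleCat.hom_ext
    show a' = b'
    have hab2 : (a' ∘ₗ LinearMap.snd R ((tower S n).A₁ →₀ R) ((tower S n).A₃ →₀ R)) =
        (b' ∘ₗ LinearMap.snd R ((tower S n).A₁ →₀ R) ((tower S n).A₃ →₀ R)) := congrArg ModuleCat.Hom.hom hab
    apply LinearMap.ext
    intro y
    have h0 := DFunLike.congr_fun hab2 ((0, y) :
      ((tower S n).A₁ →₀ R) × ((tower S n).A₃ →₀ R))
    simpa using h0
  · rw [ModuleCat.epi_iff_surjective]
    intro ψ₁
    let ψ₁' : ((tower S n).A₁ →₀ R) →ₗ[R] Y := (ψ₁ : S.res1.complex.X n ⟶ Y).hom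
    exact ⟨ModuleCat.ofHom (ψ₁' ∘ₗ LinearMap.fst R _ _), rfl⟩

end SESData
end Final
/-- Let `R` be a commutative ring, `0 → M₁ → M₂ → M₃ → 0` a short
exact sequence of `R`-modules and `N` an `R`-module.  Then for every `n ≥ 1`,
`ann_R(Ext_R^{n-1}(M₁, N)) · ann_R(Ext_R^n(M₂, N)) ⊆ ann_R(Ext_R^n(M₃, N))`. -/
theorem annihilator_ext_right {R : Type u} [CommRing R]
    {M₁ M₂ M₃ N : Type u} [AddCommGroup M₁] [Module R M₁] [AddCommGroup M₂] [Module R M₂]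
    [AddCommGroup M₃] [Module R M₃] [AddCommGroup N] [Module R N]
    (f : M₁ →ₗ[R] M₂) (g : M₂ →ₗ[R] M₃)
    (hf : Function.Injective f) (hg : Function.Surjective g) (hfg : Function.Exact f g)
    (n : ℕ) (hn : 1 ≤ n) :
    Module.annihilator R (extModule R M₁ N (n - 1)) *
        Module.annihilator R (extModule R M₂ N n) ≤
      Module.annihilator R (extModule R M₃ N n) := by
  have hx0 : ∀ y, g y = 0 ↔ y ∈ LinearMap.range f := fun y => (hfg y).trans (by simp)
  let S₀ : SESData R :=
    { A₁ := M₁, A₂ := M₂, A₃ := M₃, i := f, p := g, hi := hf, hp := hg, hx := hx0 }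
  have hSC := S₀.SC_shortExact (ModuleCat.of R N)
  have hrel : (ComplexShape.up ℕ).Rel (n - 1) n := by
    show n - 1 + 1 = n
    omega
  have E := hSC.homology_exact₁ (n - 1) n hrel
  rw [ShortComplex.moduleCat_exact_iff] at E
  rw [Ideal.mul_le]
  intro r hr s hs
  have hr1 : ∀ a : extModule R M₁ N (n - 1), r • a = 0 := Module.mem_annihilator.1 hr
  have hs1 : ∀ a : extModule R M₂ N n, s • a = 0 := Module.mem_annihilator.1 hs
  have hrH : ∀ b : ((S₀.res1.complex.linearYonedaObj R (ModuleCat.of R N)).homology (n - 1)),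
      r • b = 0 :=
    smul_all_zero_of_iso (S₀.res1.resolution.isoExt (n - 1) (ModuleCat.of R N)).symm r hr1
  have hsH : ∀ b : ((S₀.res2.complex.linearYonedaObj R (ModuleCat.of R N)).homology n),
      s • b = 0 :=
    smul_all_zero_of_iso (S₀.res2.resolution.isoExt n (ModuleCat.of R N)).symm s hs1
  have key : ∀ x : ((S₀.SC (ModuleCat.of R N)).X₁.homology n),
      (r * s) • x = 0 := by
    intro x
    have h0 : HomologicalComplex.homologyMap ((S₀.SC (ModuleCat.of R N)).f) n (s • x) = 0 := by
      exact ((HomologicalComplex.homologyMap ((S₀.SC (ModuleCat.of R N)).f) n).hom.map_smul s x).trans (hsH _)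
    obtain ⟨y, hy⟩ := E (s • x) h0
    have hry : r • y = 0 := hrH y
    calc (r * s) • x = r • (s • x) := mul_smul r s x
    _ = r • (hSC.δ (n - 1) n hrel y) := by rw [hy]
    _ = hSC.δ (n - 1) n hrel (r • y) := (map_smul (hSC.δ (n - 1) n hrel).hom r y).symm
    _ = 0 := by rw [hry, map_zero]
  rw [Module.mem_annihilator]
  exact smul_all_zero_of_iso (S₀.res3.resolution.isoExt n (ModuleCat.of R N)) (r * s) key
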